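/- arXiv:2104.05581 — 2 statements merged into one kernel-verified Lean document; each statement's English description precedes it below -/
import Mathlib

section
/- Let p be homogeneous of degree 2a and satisfy p(0,-1) = exp(iπ(2a - 2μ)) p(0,1) with μ + μ' = 2a. Define q(ξ) = (|ξ'| - iξₙ)^{-μ'} · p(ξ) · (|ξ'| + iξₙ)^{-μ} using the principal branches. Then q(0,…,0,-1) = q(0,…,0,1), i.e. q satisfies the principal 0-transmission condition, and q(0,…,0,1) = exp(-iπδ)·p(0,…,0,1) where μ = a + δ. -/
/-- If `p` is homogeneous of degree `2a` and satisfies the principal μ-transmission condition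
at the interior normal, then `q(ξ) = (|ξ'|-iξₙ)^{-μ'} p(ξ) (|ξ'|+iξₙ)^{-μ}` (with `μ' = 2a-μ`)
satisfies the principal 0-transmission condition `q(0,-1) = q(0,1)`, and
`q(0,1) = e^{-iπδ} p(0,1)` with `δ = μ - a`. -/
theorem stmt7 (n : ℕ) (a : ℝ) (ha : 0 < a) (μ : ℂ)
    (p : EuclideanSpace ℝ (Fin (n + 1)) → ℂ)
    (hom : ∀ t : ℝ, 0 < t → ∀ ξ, ξ ≠ 0 → p (t • ξ) = ((t ^ (2 * a) : ℝ) : ℂ) * p ξ)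
    (htrans : p (-(EuclideanSpace.single (Fin.last n) (1 : ℝ))) =
      Complex.exp ((Real.pi : ℂ) * Complex.I * (2 * (a : ℂ) - 2 * μ)) *
        p (EuclideanSpace.single (Fin.last n) (1 : ℝ))) :
    Complex.I ^ (-(2 * (a : ℂ) - μ)) *
        p (-(EuclideanSpace.single (Fin.last n) (1 : ℝ))) * (-Complex.I) ^ (-μ) =
      (-Complex.I) ^ (-(2 * (a : ℂ) - μ)) *
        p (EuclideanSpace.single (Fin.last n) (1 : ℝ)) * Complex.I ^ (-μ) ∧
    (-Complex.I) ^ (-(2 * (a : ℂ) - μ)) *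
        p (EuclideanSpace.single (Fin.last n) (1 : ℝ)) * Complex.I ^ (-μ) =
      Complex.exp (-(Real.pi : ℂ) * Complex.I * (μ - (a : ℂ))) *
        p (EuclideanSpace.single (Fin.last n) (1 : ℝ)) := by

  have key : ∀ (x y c : ℂ), Complex.exp x * c * Complex.exp y = Complex.exp (x + y) * c := by
    intro x y c; rw [Complex.exp_add]; ring
  have hI : ∀ w : ℂ, Complex.I ^ w = Complex.exp ((Real.pi : ℂ) / 2 * Complex.I * w) := by
    intro w
    rw [Complex.cpow_def_of_ne_zero Complex.I_ne_zero, Complex.log_I]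
  have hnI : ∀ w : ℂ, (-Complex.I) ^ w = Complex.exp (-((Real.pi : ℂ) / 2 * Complex.I) * w) := by
    intro w
    rw [Complex.cpow_def_of_ne_zero (neg_ne_zero.mpr Complex.I_ne_zero), Complex.log_neg_I]
    ring_nf
  rw [htrans, hI, hI, hnI, hnI, key, key, ← mul_assoc, ← Complex.exp_add]
  constructor <;> (congr 1; ring)
end

section
/- Let q : ℝⁿ \ {0} → ℂ be homogeneous of degree 0, C¹ on ℝⁿ \ {0}, with q(0,…,0,1) = q(0,…,0,-1) = s₀. Then f = q - s₀ satisfies the estimate |f(ξ', ξₙ)| ≤ C |ξ'| / |ξ| for all ξ = (ξ', ξₙ) ≠ 0, for some constant C. -/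
private lemma stmt8_norm_eq (n : ℕ) (x : EuclideanSpace ℝ (Fin n)) :
    ‖x‖ = Real.sqrt (∑ i, x i ^ 2) := by
  rw [EuclideanSpace.norm_eq]; simp [Real.norm_eq_abs, sq_abs]

private lemma stmt8_comp_sq (n : ℕ) (x : EuclideanSpace ℝ (Fin n)) (i : Fin n) :
    (x i)^2 ≤ ‖x‖^2 := by
  rw [stmt8_norm_eq, Real.sq_sqrt (by positivity)]
  exact Finset.single_le_sum (fun j _ => sq_nonneg (x j)) (Finset.mem_univ i)

private lemma stmt8_near_pole (n : ℕ) (u : EuclideanSpace ℝ (Fin (n+1)))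
    (hu : ‖u‖ = 1) (ha : 0 ≤ u (Fin.last n)) :
    ‖u - EuclideanSpace.single (Fin.last n) (1:ℝ)‖ ≤
      Real.sqrt 2 * Real.sqrt (∑ i : Fin n, (u (Fin.castSucc i))^2) := by
  set s := ∑ i : Fin n, (u (Fin.castSucc i))^2 with hs
  have hs0 : 0 ≤ s := Finset.sum_nonneg fun _ _ => sq_nonneg _
  have hnorm : s + (u (Fin.last n))^2 = 1 := by
    have h := stmt8_norm_eq (n+1) u
    rw [hu, Fin.sum_univ_castSucc] at h
    have := Real.sqrt_eq_one.mp h.symm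
    linarith [this]
  set a := u (Fin.last n) with haa
  have key : ∑ i : Fin (n+1), ((u - EuclideanSpace.single (Fin.last n) (1:ℝ)) i)^2 ≤ 2 * s := by
    have hexp : ∑ i : Fin (n+1), ((u - EuclideanSpace.single (Fin.last n) (1:ℝ)) i)^2
        = s + (a - 1)^2 := by
      rw [Fin.sum_univ_castSucc]
      congr 1
      · apply Finset.sum_congr rfl
        intro i _
        have : (u - EuclideanSpace.single (Fin.last n) (1:ℝ)) (Fin.castSucc i)
            = u (Fin.castSucc i) := by
          show u (Fin.castSucc i) - EuclideanSpace.single (Fin.last n) (1:ℝ) (Fin.castSucc i) = _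
          rw [EuclideanSpace.single_apply, if_neg (Fin.castSucc_lt_last i).ne, sub_zero]
        rw [this]
      · have : (u - EuclideanSpace.single (Fin.last n) (1:ℝ)) (Fin.last n) = a - 1 := by
          show u (Fin.last n) - EuclideanSpace.single (Fin.last n) (1:ℝ) (Fin.last n) = _
          rw [EuclideanSpace.single_apply, if_pos rfl]
        rw [this]
    rw [hexp]
    nlinarith [sq_nonneg a, sq_nonneg (a-1)]
  calc ‖u - EuclideanSpace.single (Fin.last n) (1:ℝ)‖
      = Real.sqrt (∑ i : Fin (n+1), ((u - EuclideanSpace.single (Fin.last n) (1:ℝ)) i)^2) :=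
        stmt8_norm_eq _ _
    _ ≤ Real.sqrt (2 * s) := Real.sqrt_le_sqrt key
    _ = Real.sqrt 2 * Real.sqrt s := Real.sqrt_mul (by norm_num) s



/-- If `q` is homogeneous of degree 0, C¹ away from 0, with the same value `s₀` at
`(0,…,0,1)` and `(0,…,0,-1)`, then `|q(ξ) - s₀| ≤ C |ξ'|/|ξ|`. -/
theorem stmt8 (n : ℕ) (s₀ : ℂ) (q : EuclideanSpace ℝ (Fin (n + 1)) → ℂ)
    (hom : ∀ t : ℝ, 0 < t → ∀ ξ, ξ ≠ 0 → q (t • ξ) = q ξ)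
    (hq : ContDiffOn ℝ 1 q {ξ | ξ ≠ 0})
    (h1 : q (EuclideanSpace.single (Fin.last n) (1 : ℝ)) = s₀)
    (h2 : q (-(EuclideanSpace.single (Fin.last n) (1 : ℝ))) = s₀) :
    ∃ C : ℝ, ∀ ξ : EuclideanSpace ℝ (Fin (n + 1)), ξ ≠ 0 →
      ‖q ξ - s₀‖ ≤
        C * Real.sqrt (∑ i : Fin n, (ξ (Fin.castSucc i)) ^ 2) / ‖ξ‖ := by
  set e : EuclideanSpace ℝ (Fin (n+1)) := EuclideanSpace.single (Fin.last n) (1:ℝ) with he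
  set r : EuclideanSpace ℝ (Fin (n+1)) → ℝ :=
    fun u => Real.sqrt (∑ i : Fin n, (u (Fin.castSucc i))^2) with hr
  have hr0 : ∀ u, 0 ≤ r u := fun u => Real.sqrt_nonneg _
  have hrneg : ∀ u : EuclideanSpace ℝ (Fin (n+1)),
      Real.sqrt (∑ i : Fin n, ((-u) (Fin.castSucc i))^2) = r u := by
    intro u
    simp only [hr]
    congr 1
    apply Finset.sum_congr rfl
    intro i _
    show (-(u (Fin.castSucc i)))^2 = _
    ring
  have helast : e (Fin.last n) = 1 := by
    rw [he]; show EuclideanSpace.single (Fin.last n) (1:ℝ) (Fin.last n) = 1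
    rw [EuclideanSpace.single_apply, if_pos rfl]
  have hne : e ≠ 0 := by
    intro h
    have : e (Fin.last n) = 0 := by rw [h]; rfl
    rw [helast] at this; norm_num at this
  have hnee : -e ≠ 0 := neg_ne_zero.mpr hne
  have hopen : IsOpen {ξ : EuclideanSpace ℝ (Fin (n+1)) | ξ ≠ 0} := isOpen_compl_singleton
  obtain ⟨K₁, t₁, ht₁, hlip₁⟩ := (hq.contDiffAt (hopen.mem_nhds hne)).exists_lipschitzOnWith
  obtain ⟨ε₁, hε₁, hball₁⟩ := Metric.mem_nhds_iff.mp ht₁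
  obtain ⟨K₂, t₂, ht₂, hlip₂⟩ := (hq.contDiffAt (hopen.mem_nhds hnee)).exists_lipschitzOnWith
  obtain ⟨ε₂, hε₂, hball₂⟩ := Metric.mem_nhds_iff.mp ht₂
  set δ₁ := min ε₁ 1 with hδ₁def
  set δ₂ := min ε₂ 1 with hδ₂def
  have hδ₁ : 0 < δ₁ := lt_min hε₁ one_pos
  have hδ₂ : 0 < δ₂ := lt_min hε₂ one_pos
  set A := {u : EuclideanSpace ℝ (Fin (n+1)) | ‖u‖ = 1 ∧ δ₁ ≤ ‖u - e‖ ∧ δ₂ ≤ ‖u + e‖} with hA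
  -- bound on the middle compact region
  have hMex : ∃ M : ℝ, ∀ u ∈ A, ‖q u - s₀‖ ≤ M * r u := by
    by_cases hA0 : A.Nonempty
    · have hrcont : Continuous r := by
        apply Real.continuous_sqrt.comp
        exact continuous_finset_sum _ fun i _ =>
          ((EuclideanSpace.proj (i.castSucc) : EuclideanSpace ℝ (Fin (n+1)) →L[ℝ] ℝ).continuous.pow 2)
      have hAc : IsCompact A := by
        have hAeq : A = Metric.sphere 0 1 ∩
            ({u | δ₁ ≤ ‖u - e‖} ∩ {u | δ₂ ≤ ‖u + e‖}) := by
          ext u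
          constructor
          · rintro ⟨h1', h2', h3'⟩
            exact ⟨mem_sphere_zero_iff_norm.mpr h1', h2', h3'⟩
          · rintro ⟨h1', h2', h3'⟩
            exact ⟨mem_sphere_zero_iff_norm.mp h1', h2', h3'⟩
        rw [hAeq]
        refine (isCompact_sphere 0 1).inter_right ?_
        refine IsClosed.inter ?_ ?_
        · exact isClosed_le continuous_const (by fun_prop)
        · exact isClosed_le continuous_const (by fun_prop)
      have hAsub : A ⊆ {ξ : EuclideanSpace ℝ (Fin (n+1)) | ξ ≠ 0} := by
        intro u hu h0
        rw [h0] at hu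
        have h1' := hu.1
        rw [norm_zero] at h1'
        exact one_ne_zero h1'.symm
      have hgcont : ContinuousOn (fun u => ‖q u - s₀‖) A :=
        continuous_norm.comp_continuousOn
          ((hq.continuousOn.mono hAsub).sub continuousOn_const)
      obtain ⟨u₀, hu₀, hmin'⟩ := hAc.exists_isMinOn hA0 hrcont.continuousOn
      have hmin : ∀ u ∈ A, r u₀ ≤ r u := fun u hu => isMinOn_iff.mp hmin' u hu
      obtain ⟨u₁, hu₁, hmax'⟩ := hAc.exists_isMaxOn hA0 hgcont
      have hmax : ∀ u ∈ A, ‖q u - s₀‖ ≤ ‖q u₁ - s₀‖ :=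
        fun u hu => isMaxOn_iff.mp hmax' u hu
      have hδ : 0 < r u₀ := by
        rcases (hr0 u₀).lt_or_eq with h | h
        · exact h
        exfalso
        have hsum : ∑ i : Fin n, (u₀ (Fin.castSucc i))^2 = 0 := by
          have := h.symm
          simp only [hr] at this
          exact (Real.sqrt_eq_zero (by positivity)).mp this
        have hcoords : ∀ i : Fin n, u₀ (Fin.castSucc i) = 0 := by
          intro i
          have := (Finset.sum_eq_zero_iff_of_nonneg (fun j _ => sq_nonneg _)).mp hsum i
            (Finset.mem_univ i)
          exact (pow_eq_zero_iff (by norm_num : (2:ℕ) ≠ 0)).mp this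
        have hlast2 : (u₀ (Fin.last n))^2 = 1 := by
          have h' := stmt8_norm_eq (n+1) u₀
          rw [hu₀.1, Fin.sum_univ_castSucc, hsum, zero_add] at h'
          have := Real.sqrt_eq_one.mp h'.symm
          linarith
        have hfac : (u₀ (Fin.last n) - 1) * (u₀ (Fin.last n) + 1) = 0 := by nlinarith
        rcases mul_eq_zero.mp hfac with hp | hp
        · have hu₀e : u₀ = e := by
            ext i
            refine Fin.lastCases ?_ (fun j => ?_) i
            · rw [helast]; linarith
            · rw [hcoords j, he]
              show (0:ℝ) = EuclideanSpace.single (Fin.last n) (1:ℝ) (Fin.castSucc j)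
              rw [EuclideanSpace.single_apply, if_neg (Fin.castSucc_lt_last j).ne]
          have := hu₀.2.1
          rw [hu₀e, sub_self, norm_zero] at this
          linarith
        · have hu₀e : u₀ = -e := by
            ext i
            refine Fin.lastCases ?_ (fun j => ?_) i
            · show u₀ (Fin.last n) = -(e (Fin.last n)); rw [helast]; linarith
            · rw [hcoords j]
              show (0:ℝ) = -(e (Fin.castSucc j))
              rw [he]
              show (0:ℝ) = -(EuclideanSpace.single (Fin.last n) (1:ℝ) (Fin.castSucc j))
              rw [EuclideanSpace.single_apply, if_neg (Fin.castSucc_lt_last j).ne, neg_zero]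
          have := hu₀.2.2
          rw [hu₀e, neg_add_cancel, norm_zero] at this
          linarith
      refine ⟨‖q u₁ - s₀‖ / r u₀, fun u hu => ?_⟩
      have h1' : ‖q u - s₀‖ ≤ ‖q u₁ - s₀‖ := hmax u hu
      have h2' : r u₀ ≤ r u := hmin u hu
      have hnn : 0 ≤ ‖q u₁ - s₀‖ := norm_nonneg _
      calc ‖q u - s₀‖ ≤ ‖q u₁ - s₀‖ := h1'
        _ = ‖q u₁ - s₀‖ / r u₀ * r u₀ := by field_simp
        _ ≤ ‖q u₁ - s₀‖ / r u₀ * r u := by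
            apply mul_le_mul_of_nonneg_left h2' (div_nonneg hnn hδ.le)
    · exact ⟨0, fun u hu => absurd ⟨u, hu⟩ hA0⟩
  obtain ⟨M, hM⟩ := hMex
  set C := max (Real.sqrt 2 * K₁) (max (Real.sqrt 2 * K₂) M) with hC
  -- the estimate on the unit sphere
  have key : ∀ u : EuclideanSpace ℝ (Fin (n+1)), ‖u‖ = 1 →
      ‖q u - s₀‖ ≤ C * r u := by
    intro u hu
    by_cases hc1 : ‖u - e‖ < δ₁
    · -- near north pole
      have hlast : 0 ≤ u (Fin.last n) := by
        have hcs := stmt8_comp_sq (n+1) (u - e) (Fin.last n)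
        have hval : (u - e) (Fin.last n) = u (Fin.last n) - 1 := by
          show u (Fin.last n) - e (Fin.last n) = _
          rw [helast]
        rw [hval] at hcs
        have h1' : ‖u - e‖ < 1 := hc1.trans_le (min_le_right _ _)
        nlinarith [norm_nonneg (u - e)]
      have hut : u ∈ t₁ := hball₁ (by
        rw [Metric.mem_ball, dist_eq_norm]
        exact hc1.trans_le (min_le_left _ _))
      have het : e ∈ t₁ := hball₁ (Metric.mem_ball_self hε₁)
      have hdist := hlip₁.dist_le_mul u hut e het
      calc ‖q u - s₀‖ = dist (q u) (q e) := by rw [Complex.dist_eq, h1]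
        _ ≤ K₁ * dist u e := hdist
        _ = K₁ * ‖u - e‖ := by rw [dist_eq_norm]
        _ ≤ K₁ * (Real.sqrt 2 * r u) := by
            exact mul_le_mul_of_nonneg_left (stmt8_near_pole n u hu hlast) K₁.coe_nonneg
        _ = Real.sqrt 2 * K₁ * r u := by ring
        _ ≤ C * r u := mul_le_mul_of_nonneg_right (le_max_left _ _) (hr0 u)
    · by_cases hc2 : ‖u + e‖ < δ₂
      · -- near south pole
        have hlast : 0 ≤ (-u) (Fin.last n) := by
          have hcs := stmt8_comp_sq (n+1) (u + e) (Fin.last n)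
          have hval : (u + e) (Fin.last n) = u (Fin.last n) + 1 := by
            show u (Fin.last n) + e (Fin.last n) = _
            rw [helast]
          rw [hval] at hcs
          have h1' : ‖u + e‖ < 1 := hc2.trans_le (min_le_right _ _)
          show 0 ≤ -(u (Fin.last n))
          nlinarith [norm_nonneg (u + e)]
        have hnp := stmt8_near_pole n (-u) (by rw [norm_neg, hu]) hlast
        have hne' : ‖-u - e‖ = ‖u + e‖ := by
          rw [show -u - e = -(u + e) by abel, norm_neg]
        rw [hne', hrneg] at hnp
        have hut : u ∈ t₂ := hball₂ (by
          rw [Metric.mem_ball, dist_eq_norm, sub_neg_eq_add]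
          exact hc2.trans_le (min_le_left _ _))
        have het : -e ∈ t₂ := hball₂ (Metric.mem_ball_self hε₂)
        have hdist := hlip₂.dist_le_mul u hut (-e) het
        calc ‖q u - s₀‖ = dist (q u) (q (-e)) := by rw [Complex.dist_eq, h2]
          _ ≤ K₂ * dist u (-e) := hdist
          _ = K₂ * ‖u + e‖ := by rw [dist_eq_norm, sub_neg_eq_add]
          _ ≤ K₂ * (Real.sqrt 2 * r u) := mul_le_mul_of_nonneg_left hnp K₂.coe_nonneg
          _ = Real.sqrt 2 * K₂ * r u := by ring
          _ ≤ C * r u := mul_le_mul_of_nonneg_right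
              ((le_max_left _ _).trans (le_max_right _ _)) (hr0 u)
      · -- middle region
        have huA : u ∈ A := ⟨hu, not_lt.mp hc1, not_lt.mp hc2⟩
        calc ‖q u - s₀‖ ≤ M * r u := hM u huA
          _ ≤ C * r u := mul_le_mul_of_nonneg_right
              ((le_max_right _ _).trans (le_max_right _ _)) (hr0 u)
  -- scale from the sphere to all of ℝⁿ⁺¹ \ {0}
  refine ⟨C, fun ξ hξ => ?_⟩
  have hξn : 0 < ‖ξ‖ := norm_pos_iff.mpr hξ
  set t := ‖ξ‖⁻¹ with htdef
  have ht : 0 < t := inv_pos.mpr hξn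
  have hun : ‖t • ξ‖ = 1 := by
    rw [norm_smul, Real.norm_eq_abs, abs_of_pos ht, htdef]
    field_simp
  have hq' : q (t • ξ) = q ξ := hom t ht ξ hξ
  have hru : r (t • ξ) = r ξ * t := by
    simp only [hr]
    have hterm : ∀ i : Fin n, ((t • ξ) (Fin.castSucc i))^2 = t^2 * (ξ (Fin.castSucc i))^2 := by
      intro i
      show (t * ξ (Fin.castSucc i))^2 = _
      ring
    rw [Finset.sum_congr rfl fun i _ => hterm i, ← Finset.mul_sum,
      Real.sqrt_mul (sq_nonneg t), Real.sqrt_sq ht.le, mul_comm]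
  have hkey := key (t • ξ) hun
  rw [hq', hru] at hkey
  calc ‖q ξ - s₀‖ ≤ C * (r ξ * t) := hkey
    _ = C * r ξ / ‖ξ‖ := by rw [htdef, div_eq_mul_inv, mul_assoc]
    _ = C * Real.sqrt (∑ i : Fin n, (ξ (Fin.castSucc i)) ^ 2) / ‖ξ‖ := by rw [hr]
end
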